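/- Let d ≥ 1 and let u : (Set ℝ^d) × ℝ^d → ℝ be a function. Let ξ ⊆ ℝ^d be a configuration with 0 ∈ ξ and let x ∈ ξ. If u satisfies the cycle condition at the translated configuration τ_x ξ (which contains 0), then u satisfies the cycle condition at ξ. -/

import Mathlib

/-- A form `u` on configurations of `ℝ^d` satisfies the cycle (curl-free) condition at a
configuration `ξ` if for every closed chain of points of `ξ` the telescoping sum of `u`
along the chain vanishes. -/
def CycleCond {d : ℕ} (u : Set (Fin d → ℝ) × (Fin d → ℝ) → ℝ) (ξ : Set (Fin d → ℝ)) : Prop :=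
  ∀ n : ℕ, 0 < n → ∀ x : ℕ → (Fin d → ℝ), (∀ j ≤ n, x j ∈ ξ) → x 0 = x n →
    ∑ j ∈ Finset.range n, u ((fun y => y - x j) '' ξ, x (j + 1) - x j) = 0

/-- Key step in the proof of Lemma 3.5 (festicciola): the set of configurations satisfying
the cycle condition is closed under translation by its own points.  If `0 ∈ ξ`, `x ∈ ξ`,
and `u` satisfies the cycle condition at `τ_x ξ`, then it satisfies it at `ξ`. -/
theorem cycleCond_of_shift (d : ℕ) (hd : 1 ≤ d)
    (u : Set (Fin d → ℝ) × (Fin d → ℝ) → ℝ) (ξ : Set (Fin d → ℝ))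
    (h0 : (0 : Fin d → ℝ) ∈ ξ) (x : Fin d → ℝ) (hx : x ∈ ξ)
    (hcyc : CycleCond u ((fun y => y - x) '' ξ)) : CycleCond u ξ := by
  intro n hn z hz hclose
  have key := hcyc n hn (fun j => z j - x)
    (fun j hj => Set.mem_image_of_mem _ (hz j hj))
    (by simp [hclose])
  have himg : ∀ j : ℕ,
      (fun y => y - (z j - x)) '' ((fun y => y - x) '' ξ) = (fun y => y - z j) '' ξ := by
    intro j
    rw [← Set.image_comp]
    apply Set.image_congr'
    intro y
    simp only [Function.comp]
    abel_nf
  calc ∑ j ∈ Finset.range n, u ((fun y => y - z j) '' ξ, z (j + 1) - z j)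
      = ∑ j ∈ Finset.range n,
          u ((fun y => y - (z j - x)) '' ((fun y => y - x) '' ξ),
            (z (j + 1) - x) - (z j - x)) := by
        refine Finset.sum_congr rfl fun j _ => ?_
        rw [himg j, sub_sub_sub_cancel_right]
    _ = 0 := key
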